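/- Let X be an uncountable quasi-Polish space. Then there is a continuous injection of the Cantor space 2^ω into X whose range is a Π⁰₂ subset of X. -/

import Mathlib

/-- `d` is a complete quasi-metric on `X` compatible with its topology:
it is nonnegative, satisfies `d(x,y) = d(y,x) = 0 ↔ x = y` and the triangle
inequality, generates the topology of `X` via its open balls, and every
`d`-Cauchy sequence converges with respect to the symmetrized metric
`d̂(x,y) = max{d(x,y), d(y,x)}`. -/
def IsCompleteQuasiMetric {X : Type*} [t : TopologicalSpace X] (d : X → X → ℝ) : Prop :=
  (∀ x y : X, 0 ≤ d x y) ∧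
  (∀ x y : X, (d x y = 0 ∧ d y x = 0) ↔ x = y) ∧
  (∀ x y z : X, d x z ≤ d x y + d y z) ∧
  (t = TopologicalSpace.generateFrom
    {B : Set X | ∃ (x : X) (ε : ℝ), 0 < ε ∧ B = {y : X | d x y < ε}}) ∧
  (∀ u : ℕ → X,
    (∀ ε : ℝ, 0 < ε → ∃ N : ℕ, ∀ m n : ℕ, N ≤ m → m ≤ n → d (u m) (u n) < ε) →
    ∃ x : X, ∀ ε : ℝ, 0 < ε → ∃ N : ℕ, ∀ n : ℕ, N ≤ n →
      max (d x (u n)) (d (u n) x) < ε)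

/-- A quasi-Polish space: a countably based T₀ space admitting a compatible complete
quasi-metric. -/
def IsQuasiPolish (X : Type*) [TopologicalSpace X] : Prop :=
  SecondCountableTopology X ∧ T0Space X ∧ ∃ d : X → X → ℝ, IsCompleteQuasiMetric d

/-- Type synonym for `X` carrying the symmetrized metric of `d`. -/
def QMSym {X : Type*} (_d : X → X → ℝ) : Type _ := X

/-- The symmetrized metric `d̂(x,y) = max (d x y) (d y x)` as a `MetricSpace`
structure on the type synonym `QMSym d`. -/
noncomputable def qmMetric {X : Type*} (d : X → X → ℝ) (h0 : ∀ x y : X, 0 ≤ d x y)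
    (he : ∀ x y : X, (d x y = 0 ∧ d y x = 0) ↔ x = y)
    (htri : ∀ x y z : X, d x z ≤ d x y + d y z) : MetricSpace (QMSym d) :=
  have ds : ∀ x : QMSym d, max (d x x) (d x x) = 0 := fun x => by
    have h := (he x x).2 rfl
    simp [h.1]
  have dc : ∀ x y : QMSym d, max (d x y) (d y x) = max (d y x) (d x y) := fun x y =>
    max_comm _ _
  have dt : ∀ x y z : QMSym d,
      max (d x z) (d z x) ≤ max (d x y) (d y x) + max (d y z) (d z y) := by
    intro x y z
    have h1 := htri x y z
    have h2 := htri z y x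
    have l1 : d x y ≤ max (d x y) (d y x) := le_max_left _ _
    have l2 : d y x ≤ max (d x y) (d y x) := le_max_right _ _
    have l3 : d y z ≤ max (d y z) (d z y) := le_max_left _ _
    have l4 : d z y ≤ max (d y z) (d z y) := le_max_right _ _
    exact max_le (by linarith) (by linarith)
  { dist := fun x y => max (d x y) (d y x)
    dist_self := ds
    dist_comm := dc
    dist_triangle := dt
    toUniformSpace := UniformSpace.ofDist _ ds dc dt
    uniformity_dist := rfl
    toBornology := Bornology.ofDist _ dc dt
    cobounded_sets := rfl
    eq_of_dist_eq_zero := by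
      intro x y h
      have hxy : d x y = 0 :=
        le_antisymm (le_of_le_of_eq (le_max_left _ _) h) (h0 x y)
      have hyx : d y x = 0 :=
        le_antisymm (le_of_le_of_eq (le_max_right _ _) h) (h0 y x)
      exact (he x y).1 ⟨hxy, hyx⟩ }

/-- In an uncountable quasi-Polish space there is a continuous injection of the Cantor
space whose range is a `Π⁰₂` set (a countable intersection of sets of the form
(complement of an open set) ∪ (open set)). -/
theorem cantor_into_uncountable_quasiPolish {X : Type*} [TopologicalSpace X]
    (hqp : IsQuasiPolish X) (hunc : ¬ Countable X) :
    ∃ φ : (ℕ → Bool) → X, Continuous φ ∧ Function.Injective φ ∧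
      ∃ U V : ℕ → Set X, (∀ n, IsOpen (U n)) ∧ (∀ n, IsOpen (V n)) ∧
        Set.range φ = ⋂ n, ((U n)ᶜ ∪ V n) := by
  classical
  obtain ⟨hsc, ht0, d, h0, he, htri, htop, hcomp⟩ := hqp
  haveI : SecondCountableTopology X := hsc
  have hne : Nonempty X := by
    by_contra h
    rw [not_nonempty_iff] at h
    haveI := h
    exact hunc inferInstance
  set Y := QMSym d with hY
  letI mY : MetricSpace Y := qmMetric d h0 he htri
  have hdist : ∀ a b : Y, dist a b = max (d a b) (d b a) := fun _ _ => rfl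
  have hdself : ∀ x : X, d x x = 0 := fun x => ((he x x).2 rfl).1
  -- d-balls are open in the original topology
  have ball_open : ∀ (x : X) (ε : ℝ), 0 < ε → IsOpen {y : X | d x y < ε} := by
    intro x ε hε
    rw [htop]
    exact TopologicalSpace.GenerateOpen.basic _ ⟨x, ε, hε, rfl⟩
  -- sets {y | q < d y x} are open in the original topology
  have hVopen : ∀ (x : X) (q : ℝ), 0 ≤ q → IsOpen {y : X | q < d y x} := by
    intro x q hq
    rw [isOpen_iff_forall_mem_open]
    intro y hy
    simp only [Set.mem_setOf_eq] at hy
    refine ⟨{w : X | d y w < d y x - q}, fun w hw => ?_, ball_open y _ (by linarith), ?_⟩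
    · simp only [Set.mem_setOf_eq] at hw ⊢
      have := htri y w x
      linarith
    · simp only [Set.mem_setOf_eq, hdself y]
      linarith
  -- the identity from the metric side to the original topology is continuous
  let toX : Y → X := fun y => y
  have hgen : ∀ s : Set X,
      TopologicalSpace.GenerateOpen {B : Set X | ∃ (x : X) (ε : ℝ), 0 < ε ∧ B = {y : X | d x y < ε}} s →
      IsOpen (toX ⁻¹' s) := by
    intro s hs
    induction hs with
    | basic B hB =>
      obtain ⟨x, ε, hε, rfl⟩ := hB
      rw [Metric.isOpen_iff]
      intro y hy
      have hy' : d x y < ε := hy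
      refine ⟨ε - d x y, by linarith, ?_⟩
      intro z hz
      rw [Metric.mem_ball, dist_comm, hdist] at hz
      have hz1 : d y z < ε - d x y := lt_of_le_of_lt (le_max_left _ _) hz
      have := htri x y z
      show d x z < ε
      linarith
    | univ => exact isOpen_univ
    | inter s₁ s₂ _ _ h1 h2 => exact h1.inter h2
    | sUnion S _ h => exact isOpen_sUnion h
  have hcont : Continuous toX := by
    rw [continuous_def]
    intro s hs
    rw [htop] at hs
    exact hgen s hs
  -- the symmetrized metric is second countable
  haveI hYsc : SecondCountableTopology Y := by
    apply Metric.secondCountable_of_almost_dense_set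
    intro ε hε
    obtain ⟨b, bct, -, hb⟩ := TopologicalSpace.exists_countable_basis X
    have key : ∀ B ∈ b, ∃ x : X,
        (∃ c : X, c ∈ B ∧ ∀ y ∈ B, d c y < ε) → (x ∈ B ∧ ∀ y ∈ B, d x y < ε) := by
      intro B _
      by_cases h : ∃ c : X, c ∈ B ∧ ∀ y ∈ B, d c y < ε
      · exact ⟨h.choose, fun _ => h.choose_spec⟩
      · exact ⟨Classical.arbitrary X, fun hc => absurd hc h⟩
    choose g hg using key
    haveI : Countable ↥b := bct.to_subtype
    refine ⟨Set.range (fun B : b => (g B.1 B.2 : Y)), Set.countable_range _, ?_⟩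
    · intro y
      have hyo : IsOpen {w : X | d y w < ε} := ball_open y ε hε
      have hyi : (y : X) ∈ {w : X | d y w < ε} := show d y y < ε by
        rw [hdself y]; exact hε
      obtain ⟨B, hBb, hyB, hBO⟩ := hb.exists_subset_of_mem_open hyi hyo
      have hP : ∃ c : X, c ∈ B ∧ ∀ w ∈ B, d c w < ε :=
        ⟨y, hyB, fun w hw => hBO hw⟩
      obtain ⟨hgB, hgball⟩ := hg B hBb hP
      refine ⟨g B hBb, ⟨⟨B, hBb⟩, rfl⟩, ?_⟩
      show max (d y (g B hBb)) (d (g B hBb) y) ≤ ε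
      have h1 : d y (g B hBb) < ε := hBO hgB
      have h2 : d (g B hBb) y < ε := hgball y hyB
      exact le_of_lt (max_lt h1 h2)
  -- the symmetrized metric is complete
  haveI hYc : CompleteSpace Y := by
    apply Metric.complete_of_cauchySeq_tendsto
    intro u hu
    rw [Metric.cauchySeq_iff] at hu
    obtain ⟨x, hx⟩ := hcomp u (by
      intro ε hε
      obtain ⟨N, hN⟩ := hu ε hε
      refine ⟨N, fun m n hm hmn => ?_⟩
      have := hN m hm n (le_trans hm hmn)
      rw [hdist] at this
      exact lt_of_le_of_lt (le_max_left _ _) this)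
    refine ⟨x, ?_⟩
    apply Metric.tendsto_atTop.2
    intro ε hε
    obtain ⟨N, hN⟩ := hx ε hε
    refine ⟨N, fun n hn => ?_⟩
    show max (d (u n) x) (d x (u n)) < ε
    have := hN n hn
    exact lt_of_le_of_lt (max_le (le_max_right _ _) (le_max_left _ _)) this
  haveI : PolishSpace Y := inferInstance
  haveI : Nonempty Y := hne
  -- embed Cantor space into Y
  have huncY : ¬ (Set.univ : Set Y).Countable := by
    rw [Set.countable_univ_iff]
    exact fun h => hunc h
  obtain ⟨f, -, hfc, hfinj⟩ :=
    isClosed_univ.exists_nat_bool_injection_of_not_countable huncY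
  set C : Set Y := Set.range f with hC
  have hCclosed : IsClosed C := (isCompact_range hfc).isClosed
  -- the Π⁰₂ description of C
  obtain ⟨u, hu⟩ := TopologicalSpace.exists_dense_seq Y
  set P : ℕ × ℕ → Prop := fun p =>
    ∀ z : Y, dist (u p.1) z < 2 / (p.2 + 1 : ℝ) → z ∉ C with hP
  set U : ℕ × ℕ → Set X := fun p =>
    if P p then {y : X | d (u p.1) y < 1 / (p.2 + 1 : ℝ)} else ∅ with hUdef
  set V : ℕ × ℕ → Set X := fun p => {y : X | 1 / (p.2 + 1 : ℝ) < d y (u p.1)} with hVdef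
  have hUopen : ∀ p, IsOpen (U p) := by
    intro p
    simp only [hUdef]
    by_cases h : P p
    · rw [if_pos h]
      exact ball_open _ _ (by positivity)
    · rw [if_neg h]; exact isOpen_empty
  have hVopen' : ∀ p, IsOpen (V p) := fun p => hVopen _ _ (by positivity)
  have hmain : C = ⋂ p : ℕ × ℕ, ((U p)ᶜ ∪ V p) := by
    ext x
    refine Iff.trans ?_ (Set.mem_iInter (x := (x : X)) (s := fun p : ℕ × ℕ => (U p)ᶜ ∪ V p)).symm
    constructor
    · intro hx p
      by_cases hxU : x ∈ U p
      · have hPp : P p := by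
          by_contra h
          simp only [hUdef, if_neg h, Set.mem_empty_iff_false] at hxU
          exact hxU
        simp only [hUdef, if_pos hPp, Set.mem_setOf_eq] at hxU
        by_cases hxV : x ∈ V p
        · exact Or.inr hxV
        exfalso
        have hxV' : d x (u p.1) ≤ 1 / (p.2 + 1 : ℝ) :=
          not_lt.1 fun hlt => hxV hlt
        have hdd : dist (u p.1) (x : Y) < 2 / (p.2 + 1 : ℝ) := by
          rw [hdist]
          have hpos : (0 : ℝ) < 1 / (p.2 + 1 : ℝ) := by positivity
          have hp1 : (0 : ℝ) < (p.2 : ℝ) + 1 := by positivity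
          have : (1 : ℝ) / (p.2 + 1 : ℝ) < 2 / (p.2 + 1 : ℝ) := by
            rw [div_lt_div_iff₀ hp1 hp1]; nlinarith
          exact lt_of_le_of_lt (max_le (le_of_lt hxU) hxV') this
        exact hPp x hdd hx
      · exact Or.inl hxU
    · intro hx
      by_contra hxC
      have hopen : IsOpen Cᶜ := hCclosed.isOpen_compl
      rw [Metric.isOpen_iff] at hopen
      obtain ⟨ε, hε, hball⟩ := hopen x hxC
      obtain ⟨n, hn⟩ := exists_nat_gt (3 / ε)
      have hn1 : (0 : ℝ) < (n : ℝ) + 1 := by positivity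
      have h3 : 3 / ((n : ℝ) + 1) < ε := by
        have h3e : 3 / ε < (n : ℝ) + 1 := lt_trans hn (by linarith)
        rw [div_lt_iff₀ hn1]
        calc (3 : ℝ) = (3 / ε) * ε := by field_simp
        _ < ((n : ℝ) + 1) * ε := mul_lt_mul_of_pos_right h3e hε
        _ = ε * ((n : ℝ) + 1) := mul_comm _ _
      obtain ⟨i, hi⟩ := Metric.denseRange_iff.1 hu (x : Y) (1 / ((n : ℝ) + 1)) (by positivity)
      have hi' : dist (u i) (x : Y) < 1 / ((n : ℝ) + 1) := by
        rw [dist_comm]; exact hi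
      have hPin : P (i, n) := by
        intro z hz hzC
        refine hball ?_ hzC
        rw [Metric.mem_ball, dist_comm]
        calc dist (x : Y) z ≤ dist (x : Y) (u i) + dist (u i) z := dist_triangle _ _ _
        _ < 1 / ((n : ℝ) + 1) + 2 / ((n : ℝ) + 1) := add_lt_add hi hz
        _ = 3 / ((n : ℝ) + 1) := by ring
        _ < ε := h3
      have := hx (i, n)
      rcases this with h | h
      · apply h
        simp only [hUdef, if_pos hPin, Set.mem_setOf_eq]
        calc d (u i) x ≤ dist (u i) (x : Y) := by rw [hdist]; exact le_max_left _ _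
        _ < 1 / ((n : ℝ) + 1) := hi'
      · simp only [hVdef, Set.mem_setOf_eq] at h
        have : d x (u i) ≤ dist (u i) (x : Y) := by
          rw [hdist]; exact le_max_right _ _
        have h : 1 / ((n : ℝ) + 1) < d x (u i) := h
        linarith [lt_of_le_of_lt this hi']
  -- reindex by ℕ using the pairing function
  refine ⟨fun a => toX (f a), hcont.comp hfc, hfinj, fun n => U (Nat.unpair n),
    fun n => V (Nat.unpair n), fun n => hUopen _, fun n => hVopen' _, ?_⟩
  have : Set.range (fun a => toX (f a)) = C := rfl
  rw [this, hmain]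
  ext x
  simp only [Set.mem_iInter]
  constructor
  · intro h n
    exact h (Nat.unpair n)
  · intro h p
    have := h (Nat.pair p.1 p.2)
    rwa [Nat.unpair_pair] at this
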